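/- Let n ≥ 1, β > 0, δ ∈ (0,1), and let Q, K ∈ ℝ^{d×d} satisfy ‖QᵀK‖_op ≤ 1. Suppose X : [0,T] → (ℝ^d ∖ {0})ⁿ is a C¹ curve satisfying the Pre-LN dynamics ẋⱼ(t) = Aⱼ(Θ(t)) for all j and t, where θⱼ(t) = xⱼ(t)/‖xⱼ(t)‖ and Aⱼ(Θ) = ∑_{k=1}^n w_{jk}(Θ) θₖ with w_{jk}(Θ) = exp(β⟨Qθⱼ, Kθₖ⟩)/∑_{l=1}^n exp(β⟨Qθⱼ, Kθ_l⟩). If ⟨θᵢ(s), θⱼ(s)⟩ ≥ 1 − δ for all i, j ∈ {1,…,n} and all s ∈ [0,T], then for every k ∈ {1,…,n} the magnitude rₖ(t) = ‖xₖ(t)‖ satisfies rₖ(t) ≥ rₖ(0) + (1 − δ) t for all t ∈ [0,T]. The same conclusion holds for the Peri-LN dynamics, in which rₖ instead satisfies ṙₖ(t) = ⟨θₖ(t), Aₖ(Θ(t))⟩ / ‖Aₖ(Θ(t))‖. -/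

import Mathlib

open Filter Real
open scoped RealInnerProductSpace BigOperators

/-- Attention vector `A_j(Θ)` with parameters `Q, K`, value matrix `V = I_d`, and inverse
temperature `β`. -/
noncomputable def attnQK {d n : ℕ} (β : ℝ)
    (Q K : EuclideanSpace ℝ (Fin d) →L[ℝ] EuclideanSpace ℝ (Fin d))
    (θ : Fin n → EuclideanSpace ℝ (Fin d)) (j : Fin n) : EuclideanSpace ℝ (Fin d) :=
  (∑ l, Real.exp (β * ⟪Q (θ j), K (θ l)⟫))⁻¹ •
    ∑ k, Real.exp (β * ⟪Q (θ j), K (θ k)⟫) • θ k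

/-- Direction of a nonzero vector: `x / ‖x‖`. -/
noncomputable def unitDir {d : ℕ} (x : EuclideanSpace ℝ (Fin d)) : EuclideanSpace ℝ (Fin d) :=
  ‖x‖⁻¹ • x

lemma hasDerivAt_norm_curve {d : ℕ} {f : ℝ → EuclideanSpace ℝ (Fin d)} {f' : EuclideanSpace ℝ (Fin d)}
    {t : ℝ} (hf : HasDerivAt f f' t) (hne : f t ≠ 0) :
    HasDerivAt (fun s => ‖f s‖) (⟪unitDir (f t), f'⟫) t := by
  have h2 : HasDerivAt (fun s => ‖f s‖ ^ 2) (2 * ⟪f t, f'⟫) t := hf.norm_sq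
  have hn0 : ‖f t‖ ≠ 0 := norm_ne_zero_iff.mpr hne
  have hsq : (‖f t‖ : ℝ) ^ 2 ≠ 0 := pow_ne_zero 2 hn0
  have h3 := h2.sqrt hsq
  have heq : (fun s => Real.sqrt (‖f s‖ ^ 2)) = fun s => ‖f s‖ := by
    funext s; exact Real.sqrt_sq (norm_nonneg _)
  rw [heq] at h3
  convert h3 using 1
  rw [Real.sqrt_sq (norm_nonneg _), unitDir, real_inner_smul_left]
  field_simp

lemma grow_lemma {T c : ℝ} (f g : ℝ → ℝ)
    (hf : ∀ t ∈ Set.Icc 0 T, HasDerivAt f (g t) t)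
    (hg : ∀ t ∈ Set.Icc 0 T, c ≤ g t) :
    ∀ t ∈ Set.Icc 0 T, f 0 + c * t ≤ f t := by
  intro t ht
  have h0T : (0:ℝ) ≤ T := le_trans ht.1 ht.2
  set F : ℝ → ℝ := fun s => f s - c * s with hF
  have hF' : ∀ s ∈ Set.Icc 0 T, HasDerivAt F (g s - c) s := by
    intro s hs
    exact ((hf s hs).sub ((hasDerivAt_id s).const_mul c)).congr_deriv (by ring)
  have hmono : MonotoneOn F (Set.Icc 0 T) := by
    apply monotoneOn_of_deriv_nonneg (convex_Icc 0 T)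
    · intro s hs; exact ((hF' s hs).continuousAt).continuousWithinAt
    · intro s hs
      exact ((hF' s (interior_subset hs)).differentiableAt).differentiableWithinAt
    · intro s hs
      rw [(hF' s (interior_subset hs)).deriv]
      have := hg s (interior_subset hs)
      linarith
  have := hmono (Set.left_mem_Icc.mpr h0T) ht ht.1
  simp only [hF, mul_zero, sub_zero] at this
  linarith

lemma attn_bounds {d n : ℕ} (hn : 1 ≤ n) (β : ℝ)
    (Q K : EuclideanSpace ℝ (Fin d) →L[ℝ] EuclideanSpace ℝ (Fin d))
    (θ : Fin n → EuclideanSpace ℝ (Fin d)) (hθ : ∀ i, ‖θ i‖ = 1)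
    {δ : ℝ} (hip : ∀ i j, 1 - δ ≤ ⟪θ i, θ j⟫) (j : Fin n) :
    1 - δ ≤ ⟪θ j, attnQK β Q K θ j⟫ ∧ ‖attnQK β Q K θ j‖ ≤ 1 := by
  set e : Fin n → ℝ := fun k => Real.exp (β * ⟪Q (θ j), K (θ k)⟫) with he
  have hepos : ∀ k, 0 < e k := fun k => Real.exp_pos _
  have hSpos : 0 < ∑ l, e l := Finset.sum_pos (fun l _ => hepos l) (by
    simpa [Finset.univ_nonempty_iff] using Fin.pos_iff_nonempty.mp (by omega))
  constructor
  · rw [attnQK, real_inner_smul_right, inner_sum]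
    have h1 : (1 - δ) * (∑ l, e l) ≤ ∑ k, ⟪θ j, e k • θ k⟫ := by
      rw [Finset.mul_sum]
      apply Finset.sum_le_sum
      intro k _
      rw [real_inner_smul_right, mul_comm]
      exact mul_le_mul_of_nonneg_left (hip j k) (hepos k).le
    calc 1 - δ = (∑ l, e l)⁻¹ * ((1 - δ) * (∑ l, e l)) := by
          rw [mul_comm (1 - δ), inv_mul_cancel_left₀ hSpos.ne']
      _ ≤ _ := mul_le_mul_of_nonneg_left h1 (by positivity)
  · rw [attnQK, norm_smul]
    have h2 : ‖∑ k, e k • θ k‖ ≤ ∑ l, e l := by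
      refine (norm_sum_le _ _).trans ?_
      apply Finset.sum_le_sum
      intro k _
      rw [norm_smul, hθ k, mul_one, Real.norm_eq_abs, abs_of_pos (hepos k)]
    calc ‖(∑ l, e l)⁻¹‖ * ‖∑ k, e k • θ k‖ ≤ ‖(∑ l, e l)⁻¹‖ * (∑ l, e l) :=
          mul_le_mul_of_nonneg_left h2 (norm_nonneg _)
      _ = 1 := by
          rw [Real.norm_eq_abs, abs_inv, abs_of_pos hSpos, inv_mul_cancel₀ hSpos.ne']

/-- radial growth in a local cone for Pre-LN and Peri-LN. -/
theorem radial_growth_in_cone (d n : ℕ) (hn : 1 ≤ n) (β : ℝ) (hβ : 0 < β)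
    (δ : ℝ) (hδ : δ ∈ Set.Ioo (0 : ℝ) 1)
    (Q K : EuclideanSpace ℝ (Fin d) →L[ℝ] EuclideanSpace ℝ (Fin d))
    (hQK : ‖(ContinuousLinearMap.adjoint Q).comp K‖ ≤ 1)
    (T : ℝ) (hT : 0 ≤ T) :
    ((∀ x : ℝ → Fin n → EuclideanSpace ℝ (Fin d),
      (∀ t ∈ Set.Icc 0 T, ∀ j, x t j ≠ 0) →
      (∀ t ∈ Set.Icc 0 T, ∀ j, HasDerivAt (fun s => x s j)
        (attnQK β Q K (fun k => unitDir (x t k)) j) t) →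
      (∀ s ∈ Set.Icc 0 T, ∀ i j : Fin n,
        1 - δ ≤ ⟪unitDir (x s i), unitDir (x s j)⟫) →
      ∀ k : Fin n, ∀ t ∈ Set.Icc 0 T, ‖x 0 k‖ + (1 - δ) * t ≤ ‖x t k‖)) ∧
    ((∀ x : ℝ → Fin n → EuclideanSpace ℝ (Fin d),
      (∀ t ∈ Set.Icc 0 T, ∀ j, x t j ≠ 0) →
      (∀ t ∈ Set.Icc 0 T, ∀ j, HasDerivAt (fun s => x s j)
        (‖attnQK β Q K (fun k => unitDir (x t k)) j‖⁻¹ •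
          attnQK β Q K (fun k => unitDir (x t k)) j) t) →
      (∀ s ∈ Set.Icc 0 T, ∀ i j : Fin n,
        1 - δ ≤ ⟪unitDir (x s i), unitDir (x s j)⟫) →
      ∀ k : Fin n, ∀ t ∈ Set.Icc 0 T, ‖x 0 k‖ + (1 - δ) * t ≤ ‖x t k‖)) := by
  have hunit : ∀ (y : EuclideanSpace ℝ (Fin d)), y ≠ 0 → ‖unitDir y‖ = 1 := by
    intro y hy
    rw [unitDir, norm_smul, norm_inv, norm_norm,
      inv_mul_cancel₀ (norm_ne_zero_iff.mpr hy)]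
  constructor
  · intro x hne hderiv hcone k
    apply grow_lemma (fun t => ‖x t k‖)
      (fun t => ⟪unitDir (x t k), attnQK β Q K (fun l => unitDir (x t l)) k⟫)
    · intro t ht
      exact hasDerivAt_norm_curve (hderiv t ht k) (hne t ht k)
    · intro t ht
      exact (attn_bounds hn β Q K _ (fun i => hunit _ (hne t ht i))
        (hcone t ht) k).1
  · intro x hne hderiv hcone k
    apply grow_lemma (fun t => ‖x t k‖)
      (fun t => ⟪unitDir (x t k),
        ‖attnQK β Q K (fun l => unitDir (x t l)) k‖⁻¹ •
          attnQK β Q K (fun l => unitDir (x t l)) k⟫)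
    · intro t ht
      exact hasDerivAt_norm_curve (hderiv t ht k) (hne t ht k)
    · intro t ht
      obtain ⟨h1, h2⟩ := attn_bounds hn β Q K _ (fun i => hunit _ (hne t ht i))
        (hcone t ht) k
      rw [real_inner_smul_right]
      have hpos : 0 < ⟪unitDir (x t k), attnQK β Q K (fun l => unitDir (x t l)) k⟫ :=
        lt_of_lt_of_le (by linarith [hδ.2]) h1
      have hAnorm : 0 < ‖attnQK β Q K (fun l => unitDir (x t l)) k‖ := by
        by_contra h
        push_neg at h
        have : attnQK β Q K (fun l => unitDir (x t l)) k = 0 :=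
          norm_le_zero_iff.mp h
        rw [this, inner_zero_right] at hpos
        exact lt_irrefl _ hpos
      have hinv : 1 ≤ ‖attnQK β Q K (fun l => unitDir (x t l)) k‖⁻¹ :=
        (one_le_inv_iff₀.mpr ⟨hAnorm, h2⟩)
      calc 1 - δ ≤ ⟪unitDir (x t k), attnQK β Q K (fun l => unitDir (x t l)) k⟫ := h1
        _ ≤ _ := le_mul_of_one_le_left hpos.le hinv
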